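/- Assume rank(P) = rank(Q). Then the operator norm of P − Q is attained on the image of Q: ‖P − Q‖ = sup { ‖(P−Q)θ‖ : θ ∈ Im(Q), ‖θ‖ = 1 }. -/

import Mathlib

open scoped RealInnerProductSpace

private lemma sq_eq_of_nonneg {a b : ℝ} (ha : 0 ≤ a) (hb : 0 ≤ b) (h : a ^ 2 = b ^ 2) :
    a = b := by nlinarith

set_option maxHeartbeats 1600000 in
theorem proj_diff_norm_attained_on_range
    (d : ℕ) (P Q : EuclideanSpace ℝ (Fin d) →L[ℝ] EuclideanSpace ℝ (Fin d))
    (hPsym : ∀ x y : EuclideanSpace ℝ (Fin d), ⟪P x, y⟫ = ⟪x, P y⟫)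
    (hPidem : ∀ x, P (P x) = P x)
    (hQsym : ∀ x y : EuclideanSpace ℝ (Fin d), ⟪Q x, y⟫ = ⟪x, Q y⟫)
    (hQidem : ∀ x, Q (Q x) = Q x)
    (hrank : Module.finrank ℝ (LinearMap.range (P : EuclideanSpace ℝ (Fin d) →ₗ[ℝ] EuclideanSpace ℝ (Fin d))) = Module.finrank ℝ (LinearMap.range (Q : EuclideanSpace ℝ (Fin d) →ₗ[ℝ] EuclideanSpace ℝ (Fin d))))
    (hQne : LinearMap.range (Q : EuclideanSpace ℝ (Fin d) →ₗ[ℝ] EuclideanSpace ℝ (Fin d)) ≠ ⊥) :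
    ‖P - Q‖ =
      sSup ((fun θ => ‖(P - Q) θ‖) ''
        {θ : EuclideanSpace ℝ (Fin d) | θ ∈ LinearMap.range (Q : EuclideanSpace ℝ (Fin d) →ₗ[ℝ] EuclideanSpace ℝ (Fin d)) ∧ ‖θ‖ = 1}) := by
  set E := EuclideanSpace ℝ (Fin d) with hE
  set A := P - Q with hA
  have hAapp : ∀ x : E, A x = P x - Q x := fun x => rfl
  have hAsym : ∀ x y : E, ⟪A x, y⟫ = ⟪x, A y⟫ := by
    intro x y
    simp only [hAapp, inner_sub_left, inner_sub_right, hPsym, hQsym]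
  -- A² commutes with Q
  have hAAQ : ∀ x : E, A (A (Q x)) = Q (A (A x)) := by
    intro x
    simp only [hAapp, map_sub, hPidem, hQidem]
    abel
  -- A² commutes with P
  have hAAP : ∀ x : E, A (A (P x)) = P (A (A x)) := by
    intro x
    simp only [hAapp, map_sub, hPidem, hQidem]
    abel
  -- a nonzero element of range Q
  obtain ⟨y, hyQ, hy0⟩ := Submodule.ne_bot_iff _ |>.mp hQne
  haveI : Nontrivial E := ⟨⟨y, 0, hy0⟩⟩
  -- eigenvector criterion
  have key : ∀ u : E, u ≠ 0 → A (A u) = (‖A‖ ^ 2) • u → ‖A (‖u‖⁻¹ • u)‖ = ‖A‖ := by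
    intro u hu heig
    have hnu : ‖u‖ ≠ 0 := norm_ne_zero_iff.mpr hu
    have h1 : ‖(‖u‖⁻¹ • u)‖ = 1 := by
      rw [norm_smul, norm_inv, norm_norm, inv_mul_cancel₀ hnu]
    set θ := ‖u‖⁻¹ • u with hθ
    have heig' : A (A θ) = (‖A‖ ^ 2) • θ := by
      rw [hθ, map_smul, map_smul, heig, smul_comm]
    have hsq : ‖A θ‖ ^ 2 = ‖A‖ ^ 2 := by
      have := real_inner_self_eq_norm_sq (A θ)
      rw [hAsym θ (A θ), heig', real_inner_smul_right, real_inner_self_eq_norm_sq, h1] at this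
      simpa using this.symm
    exact sq_eq_of_nonneg (norm_nonneg _) (norm_nonneg _) hsq
  -- maximizer on the sphere
  obtain ⟨v, hvs, hvmax⟩ := (isCompact_sphere (0 : E) 1).exists_isMaxOn
    (NormedSpace.sphere_nonempty.mpr zero_le_one)
    (A.continuous.norm.continuousOn)
  have hv1 : ‖v‖ = 1 := mem_sphere_zero_iff_norm.mp hvs
  have hAv : ‖A v‖ = ‖A‖ := by
    apply le_antisymm
    · calc ‖A v‖ ≤ ‖A‖ * ‖v‖ := A.le_opNorm v
        _ = ‖A‖ := by rw [hv1, mul_one]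
    · apply A.opNorm_le_bound (norm_nonneg _)
      intro x
      rcases eq_or_ne x 0 with rfl | hx
      · simp
      · have hnx : ‖x‖ ≠ 0 := norm_ne_zero_iff.mpr hx
        have hnx0 : 0 < ‖x‖ := norm_pos_iff.mpr hx
        have hxs : (‖x‖⁻¹ • x) ∈ Metric.sphere (0 : E) 1 := by
          rw [mem_sphere_zero_iff_norm, norm_smul, norm_inv, norm_norm,
            inv_mul_cancel₀ hnx]
        have h2 : ‖A (‖x‖⁻¹ • x)‖ ≤ ‖A v‖ := hvmax hxs
        rw [map_smul, norm_smul, norm_inv, norm_norm] at h2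
        rw [mul_comm]
        calc ‖A x‖ = ‖x‖ * (‖x‖⁻¹ * ‖A x‖) := by field_simp
          _ ≤ ‖x‖ * ‖A v‖ := mul_le_mul_of_nonneg_left h2 (norm_nonneg _)
  -- v is an eigenvector of A² with eigenvalue ‖A‖²
  have hA2v : A (A v) = (‖A‖ ^ 2) • v := by
    have hle : ‖A (A v)‖ ≤ ‖A‖ ^ 2 := by
      calc ‖A (A v)‖ ≤ ‖A‖ * ‖A v‖ := A.le_opNorm _
        _ = ‖A‖ ^ 2 := by rw [hAv]; ring
    have hinner : ⟪A (A v), v⟫ = ‖A‖ ^ 2 := by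
      rw [hAsym (A v) v, real_inner_self_eq_norm_sq, hAv]
    have hzero : ‖A (A v) - (‖A‖ ^ 2) • v‖ ^ 2 = 0 := by
      have hexp := norm_sub_sq_real (A (A v)) ((‖A‖ ^ 2) • v)
      rw [real_inner_smul_right, hinner, norm_smul] at hexp
      simp only [Real.norm_eq_abs, abs_pow, sq_abs, hv1, mul_one] at hexp
      have h2 : ‖A (A v)‖ ^ 2 ≤ (‖A‖ ^ 2) ^ 2 := by
        have := norm_nonneg (A (A v)); nlinarith
      nlinarith [sq_nonneg (‖A (A v) - (‖A‖ ^ 2) • v‖)]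
    have h0 : ‖A (A v) - (‖A‖ ^ 2) • v‖ = 0 := by
      have := norm_nonneg (A (A v) - (‖A‖ ^ 2) • v); nlinarith
    exact sub_eq_zero.mp (norm_eq_zero.mp h0)
  -- produce a unit vector in range Q attaining the operator norm
  have main : ∃ θ : E, θ ∈ LinearMap.range (Q : E →ₗ[ℝ] E) ∧ ‖θ‖ = 1 ∧ ‖A θ‖ = ‖A‖ := by
    rcases eq_or_ne ‖A‖ 0 with hA0 | hA0
    · refine ⟨‖y‖⁻¹ • y, Submodule.smul_mem _ _ hyQ, ?_, ?_⟩
      · rw [norm_smul, norm_inv, norm_norm, inv_mul_cancel₀ (norm_ne_zero_iff.mpr hy0)]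
      · have h := A.le_opNorm (‖y‖⁻¹ • y)
        rw [hA0, zero_mul] at h
        rw [hA0]
        exact le_antisymm h (norm_nonneg _)
    · rcases eq_or_ne (Q v) 0 with hQv0 | hQv
      · rcases eq_or_ne (Q (P v)) 0 with hQPv0 | hQPv
        · -- hardest case: Q v = 0 and Q (P v) = 0; use the rank hypothesis
          have hPv : P v = (‖A‖ ^ 2) • v := by
            have h := hA2v
            simp only [hAapp, map_sub, hPidem, hQidem, hQv0, hQPv0, map_zero, sub_zero] at h
            exact h
          have hv0 : v ≠ 0 := by
            intro h; rw [h, norm_zero] at hv1; exact zero_ne_one hv1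
          have hc : (‖A‖ ^ 2 * ‖A‖ ^ 2) • v = (‖A‖ ^ 2) • v := by
            have := hPidem v
            rw [hPv, map_smul, hPv, smul_smul] at this
            exact this
          have hcc : ‖A‖ ^ 2 * ‖A‖ ^ 2 = ‖A‖ ^ 2 := smul_left_injective ℝ hv0 hc
          have hc1 : ‖A‖ ^ 2 = 1 := by
            have hne : ‖A‖ ^ 2 ≠ 0 := pow_ne_zero 2 hA0
            exact mul_left_cancel₀ hne (by rw [mul_one]; exact hcc)
          have hPvv : P v = v := by rw [hPv, hc1, one_smul]
          have hnA1 : ‖A‖ = 1 :=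
            sq_eq_of_nonneg (norm_nonneg _) zero_le_one (by rw [hc1]; norm_num)
          -- rank argument: there is a nonzero w in range Q with P w = 0
          have hw : ∃ w : E, w ∈ LinearMap.range (Q : E →ₗ[ℝ] E) ∧ w ≠ 0 ∧ P w = 0 := by
            by_contra hcon
            push_neg at hcon
            set f := (P : E →ₗ[ℝ] E).domRestrict (LinearMap.range (Q : E →ₗ[ℝ] E)) with hf
            have hker : LinearMap.ker f = ⊥ := by
              rw [LinearMap.ker_eq_bot']
              intro m hm
              by_contra hm0
              exact hcon m.1 m.2 (fun h => hm0 (Subtype.ext h)) hm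
            have hrangef : LinearMap.range f = (LinearMap.range (Q : E →ₗ[ℝ] E)).map (P : E →ₗ[ℝ] E) :=
              LinearMap.range_domRestrict _ _
            have hfr : Module.finrank ℝ (LinearMap.range f)
                = Module.finrank ℝ (LinearMap.range (Q : E →ₗ[ℝ] E)) := by
              have h := LinearMap.finrank_range_add_finrank_ker f
              rw [hker, finrank_bot, add_zero] at h
              exact h
            have hle2 : (LinearMap.range (Q : E →ₗ[ℝ] E)).map (P : E →ₗ[ℝ] E) ≤ LinearMap.range (P : E →ₗ[ℝ] E) := by
              rintro x ⟨z, hz, rfl⟩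
              exact LinearMap.mem_range.mpr ⟨z, rfl⟩
            have heq : (LinearMap.range (Q : E →ₗ[ℝ] E)).map (P : E →ₗ[ℝ] E) = LinearMap.range (P : E →ₗ[ℝ] E) :=
              Submodule.eq_of_le_of_finrank_eq hle2 (by rw [← hrangef, hfr, hrank])
            have hvP : v ∈ (LinearMap.range (Q : E →ₗ[ℝ] E)).map (P : E →ₗ[ℝ] E) := by
              rw [heq]; exact LinearMap.mem_range.mpr ⟨v, hPvv⟩
            obtain ⟨u, huQ, hPu⟩ := hvP
            obtain ⟨z, hz⟩ := huQ
            have h1 : ⟪v, v⟫ = 1 := by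
              rw [real_inner_self_eq_norm_sq, hv1]; norm_num
            have h2 : ⟪v, v⟫ = 0 := by
              calc ⟪v, v⟫ = ⟪v, P u⟫ := by rw [show P u = v from hPu]
                _ = ⟪P v, u⟫ := (hPsym v u).symm
                _ = ⟪v, u⟫ := by rw [hPvv]
                _ = ⟪v, Q z⟫ := congrArg (fun t => ⟪v, t⟫) hz.symm
                _ = ⟪Q v, z⟫ := (hQsym v z).symm
                _ = 0 := by rw [hQv0, inner_zero_left]
            rw [h1] at h2
            exact one_ne_zero h2
          obtain ⟨w, hwQ, hw0, hPw⟩ := hw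
          obtain ⟨z, hz⟩ := hwQ
          have hQw : Q w = w := by rw [← hz]; exact hQidem z
          refine ⟨‖w‖⁻¹ • w, Submodule.smul_mem _ _ ⟨z, hz⟩, ?_, ?_⟩
          · rw [norm_smul, norm_inv, norm_norm, inv_mul_cancel₀ (norm_ne_zero_iff.mpr hw0)]
          · have hAw : A w = -w := by rw [hAapp, hPw, hQw, zero_sub]
            rw [map_smul, hAw, smul_neg, norm_neg, norm_smul, norm_inv, norm_norm,
              inv_mul_cancel₀ (norm_ne_zero_iff.mpr hw0), hnA1]
        · -- Q (P v) ≠ 0 : it is an eigenvector of A² in range Q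
          refine ⟨‖Q (P v)‖⁻¹ • Q (P v), Submodule.smul_mem _ _ ⟨P v, rfl⟩, ?_, ?_⟩
          · rw [norm_smul, norm_inv, norm_norm, inv_mul_cancel₀ (norm_ne_zero_iff.mpr hQPv)]
          · exact key (Q (P v)) hQPv (by rw [hAAQ, hAAP, hA2v, map_smul, map_smul])
      · -- Q v ≠ 0 : it is an eigenvector of A² in range Q
        refine ⟨‖Q v‖⁻¹ • Q v, Submodule.smul_mem _ _ ⟨v, rfl⟩, ?_, ?_⟩
        · rw [norm_smul, norm_inv, norm_norm, inv_mul_cancel₀ (norm_ne_zero_iff.mpr hQv)]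
        · exact key (Q v) hQv (by rw [hAAQ, hA2v, map_smul])
  obtain ⟨θ, hθQ, hθ1, hθA⟩ := main
  have hbdd : ∀ a ∈ (fun θ => ‖A θ‖) '' {θ : E | θ ∈ LinearMap.range (Q : E →ₗ[ℝ] E) ∧ ‖θ‖ = 1}, a ≤ ‖A‖ := by
    rintro a ⟨x, ⟨hxQ, hx1⟩, rfl⟩
    calc ‖A x‖ ≤ ‖A‖ * ‖x‖ := A.le_opNorm x
      _ = ‖A‖ := by rw [hx1, mul_one]
  apply le_antisymm
  · exact le_csSup ⟨‖A‖, fun a ha => hbdd a ha⟩ ⟨θ, ⟨hθQ, hθ1⟩, hθA⟩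
  · exact csSup_le ⟨‖A θ‖, θ, ⟨hθQ, hθ1⟩, rfl⟩ hbdd
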